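/- arXiv:1909.01321 — 5 statements merged into one kernel-verified Lean document; each statement's English description precedes it below -/
import Mathlib

section
/- Let β > 0 and let i, m be integers with 1 ≤ i < m. If z is the m-th positive zero of the Bessel function 𝒥_β and z' is the i-th positive zero of the Bessel function 𝒥_{β+2(m−i)}, then z' < z. -/
noncomputable def bcoef (γ : ℝ) (k : ℕ) : ℝ :=
  (-1 : ℝ) ^ k / (Nat.factorial k * Real.Gamma ((k : ℝ) + 1 + γ))

noncomputable def bF (γ x : ℝ) : ℝ := ∑' k : ℕ, bcoef γ k * x ^ k

lemma gamma_lb (γ : ℝ) (hγ : 0 < γ) (k : ℕ) :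
    Real.Gamma (1 + γ) * (1 + γ) ^ k ≤ Real.Gamma ((k : ℝ) + 1 + γ) := by
  induction k with
  | zero => simp
  | succ n ih =>
    have h1 : ((n : ℝ) + 1 + γ) ≠ 0 := by positivity
    have : Real.Gamma ((n + 1 : ℕ) + 1 + γ) = ((n : ℝ) + 1 + γ) * Real.Gamma ((n : ℝ) + 1 + γ) := by
      rw [show (((n + 1 : ℕ) : ℝ) + 1 + γ) = ((n : ℝ) + 1 + γ) + 1 by push_cast; ring]
      exact Real.Gamma_add_one h1
    rw [this, pow_succ]
    have hΓ : 0 < Real.Gamma ((n : ℝ) + 1 + γ) := Real.Gamma_pos_of_pos (by positivity)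
    calc Real.Gamma (1 + γ) * ((1 + γ) ^ n * (1 + γ))
        = (Real.Gamma (1 + γ) * (1 + γ) ^ n) * (1 + γ) := by ring
      _ ≤ Real.Gamma ((n : ℝ) + 1 + γ) * ((n : ℝ) + 1 + γ) := by
          apply mul_le_mul ih (by linarith [Nat.cast_nonneg (α := ℝ) n]) (by positivity) hΓ.le
      _ = ((n : ℝ) + 1 + γ) * Real.Gamma ((n : ℝ) + 1 + γ) := by ring

lemma bcoef_abs_le (γ : ℝ) (hγ : 0 < γ) (k : ℕ) :
    |bcoef γ k| ≤ 1 / (Nat.factorial k * Real.Gamma (1 + γ) * (1 + γ) ^ k) := by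
  have hΓ1 : 0 < Real.Gamma (1 + γ) := Real.Gamma_pos_of_pos (by positivity)
  have hΓ : 0 < Real.Gamma ((k : ℝ) + 1 + γ) := Real.Gamma_pos_of_pos (by positivity)
  have hf : (0:ℝ) < Nat.factorial k := by exact_mod_cast Nat.factorial_pos k
  rw [bcoef, abs_div, abs_pow, abs_neg, abs_one, one_pow]
  rw [abs_of_pos (by positivity)]
  apply one_div_le_one_div_of_le (by positivity)
  calc (Nat.factorial k : ℝ) * Real.Gamma (1 + γ) * (1 + γ) ^ k
      = (Nat.factorial k : ℝ) * (Real.Gamma (1 + γ) * (1 + γ) ^ k) := by ring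
    _ ≤ (Nat.factorial k : ℝ) * Real.Gamma ((k : ℝ) + 1 + γ) :=
        mul_le_mul_of_nonneg_left (gamma_lb γ hγ k) hf.le

lemma bF_term_abs_le (γ : ℝ) (hγ : 0 < γ) (x : ℝ) (k : ℕ) :
    |bcoef γ k * x ^ k| ≤ (1 / Real.Gamma (1 + γ)) * (|x| / (1 + γ)) ^ k / (Nat.factorial k) := by
  have hΓ1 : 0 < Real.Gamma (1 + γ) := Real.Gamma_pos_of_pos (by positivity)
  have hf : (0:ℝ) < Nat.factorial k := by exact_mod_cast Nat.factorial_pos k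
  rw [abs_mul, abs_pow]
  calc |bcoef γ k| * |x| ^ k
      ≤ (1 / (Nat.factorial k * Real.Gamma (1 + γ) * (1 + γ) ^ k)) * |x| ^ k :=
        mul_le_mul_of_nonneg_right (bcoef_abs_le γ hγ k) (by positivity)
    _ = (1 / Real.Gamma (1 + γ)) * (|x| / (1 + γ)) ^ k / (Nat.factorial k) := by
        rw [div_pow]
        field_simp

lemma summable_bound (γ : ℝ) (hγ : 0 < γ) (x : ℝ) :
    Summable (fun k : ℕ => (1 / Real.Gamma (1 + γ)) * (|x| / (1 + γ)) ^ k / (Nat.factorial k)) := by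
  simpa [mul_div_assoc] using
    (Real.summable_pow_div_factorial (|x| / (1 + γ))).mul_left (1 / Real.Gamma (1 + γ))

lemma bF_summable (γ : ℝ) (hγ : 0 < γ) (x : ℝ) :
    Summable (fun k : ℕ => bcoef γ k * x ^ k) := by
  apply Summable.of_abs
  apply Summable.of_nonneg_of_le (fun k => abs_nonneg _) (bF_term_abs_le γ hγ x)
    (summable_bound γ hγ x)


lemma bcoef_succ (γ : ℝ) (k : ℕ) : ((k : ℝ) + 1) * bcoef γ (k + 1) = -bcoef (γ + 1) k := by
  have h1 : (((k+1 : ℕ) : ℝ) + 1 + γ) = ((k : ℝ) + 1 + (γ + 1)) := by push_cast; ring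
  have h2 : ((Nat.factorial (k+1) : ℝ)) = ((k : ℝ) + 1) * Nat.factorial k := by
    rw [Nat.factorial_succ]; push_cast; ring
  rw [bcoef, bcoef, h1, h2, pow_succ]
  have hf : (Nat.factorial k : ℝ) ≠ 0 := by exact_mod_cast (Nat.factorial_pos k).ne'
  have hk : ((k : ℝ) + 1) ≠ 0 := by positivity
  by_cases hΓ : Real.Gamma ((k : ℝ) + 1 + (γ + 1)) = 0
  · rw [hΓ]; simp
  · field_simp

lemma bF_hasDerivAt (γ : ℝ) (hγ : 0 < γ) (x : ℝ) :
    HasDerivAt (bF γ) (-bF (γ + 1) x) x := by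
  have hΓ1 : 0 < Real.Gamma (1 + γ) := Real.Gamma_pos_of_pos (by positivity)
  set R : ℝ := |x| + 1 with hR
  have hR1 : (1:ℝ) ≤ R := by rw [hR]; linarith [abs_nonneg x]
  have hxR : x ∈ Set.Ioo (-R) R := by
    constructor <;> cases abs_cases x <;> simp [hR] <;> linarith
  set u : ℕ → ℝ := fun k => Nat.casesOn k 0 (fun j => (1 / Real.Gamma (1 + γ)) * R ^ j / Nat.factorial j) with hu
  have hu_sum : Summable u := by
    rw [← summable_nat_add_iff 1]
    simpa [hu, mul_div_assoc] using (Real.summable_pow_div_factorial R).mul_left (1 / Real.Gamma (1 + γ))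
  have hbound : ∀ (k : ℕ), ∀ y ∈ Set.Ioo (-R) R, ‖bcoef γ k * ((k : ℝ) * y ^ (k - 1))‖ ≤ u k := by
    rintro (_ | k) y hy
    · simp [hu]
    · have hyR : |y| ≤ R := by rw [abs_le]; constructor <;> [exact hy.1.le; exact hy.2.le]
      have h2 : ((Nat.factorial (k+1) : ℝ)) = ((k : ℝ) + 1) * Nat.factorial k := by
        rw [Nat.factorial_succ]; push_cast; ring
      have hb := bcoef_abs_le γ hγ (k+1)
      have hf : (0:ℝ) < Nat.factorial k := by exact_mod_cast Nat.factorial_pos k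
      simp only [hu, Real.norm_eq_abs, Nat.add_sub_cancel, abs_mul, abs_pow]
      calc |bcoef γ (k+1)| * (|((k+1 : ℕ) : ℝ)| * |y| ^ k)
          ≤ (1 / (Nat.factorial (k+1) * Real.Gamma (1 + γ) * (1 + γ) ^ (k+1))) * (((k : ℝ)+1) * R ^ k) := by
            apply mul_le_mul hb _ (by positivity) (by positivity)
            rw [show |((k+1 : ℕ) : ℝ)| = (k:ℝ)+1 by rw [abs_of_nonneg (by positivity)]; push_cast; ring]
            apply mul_le_mul le_rfl (pow_le_pow_left₀ (abs_nonneg _) hyR k) (by positivity) (by positivity)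
        _ ≤ (1 / (Nat.factorial (k+1) * Real.Gamma (1 + γ))) * (((k : ℝ)+1) * R ^ k) := by
            apply mul_le_mul_of_nonneg_right _ (by positivity)
            apply one_div_le_one_div_of_le (by positivity)
            nlinarith [pow_le_pow_left₀ (by linarith : (0:ℝ) ≤ 1) (by linarith : (1:ℝ) ≤ 1 + γ) (k+1),
              one_le_pow₀ (by linarith : (1:ℝ) ≤ 1+γ) (n := k+1),
              mul_pos (mul_pos (by exact_mod_cast Nat.factorial_pos (k+1) : (0:ℝ) < Nat.factorial (k+1)) hΓ1) (pow_pos (by linarith : (0:ℝ) < 1+γ) (k+1))]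
        _ = 1 / Real.Gamma (1 + γ) * R ^ k / Nat.factorial k := by
            rw [h2]; field_simp
  have hderiv : ∀ (k : ℕ), ∀ y ∈ Set.Ioo (-R) R,
      HasDerivAt (fun z => bcoef γ k * z ^ k) (bcoef γ k * ((k : ℝ) * y ^ (k - 1))) y :=
    fun k y _ => (hasDerivAt_pow k y).const_mul (bcoef γ k)
  have key := hasDerivAt_tsum_of_isPreconnected hu_sum isOpen_Ioo (convex_Ioo (-R) R).isPreconnected
    hderiv hbound (Set.mem_Ioo.2 ⟨by linarith, by linarith⟩ : (0:ℝ) ∈ Set.Ioo (-R) R)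
    (bF_summable γ hγ 0) hxR
  have hsum' : Summable (fun k : ℕ => bcoef γ k * ((k : ℝ) * x ^ (k - 1))) := by
    apply Summable.of_norm
    exact Summable.of_nonneg_of_le (fun k => norm_nonneg _) (fun k => hbound k x hxR) hu_sum
  have heq : (∑' k : ℕ, bcoef γ k * ((k : ℝ) * x ^ (k - 1))) = -bF (γ + 1) x := by
    rw [hsum'.tsum_eq_zero_add]
    simp only [Nat.cast_zero, zero_mul, mul_zero, zero_add, Nat.add_sub_cancel]
    have : ∀ k : ℕ, bcoef γ (k+1) * (((k+1 : ℕ) : ℝ) * x ^ k) = -(bcoef (γ+1) k * x ^ k) := by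
      intro k
      have h := bcoef_succ γ k
      push_cast
      calc bcoef γ (k+1) * (((k:ℝ) + 1) * x ^ k) = (((k:ℝ)+1) * bcoef γ (k+1)) * x ^ k := by ring
        _ = -(bcoef (γ+1) k * x ^ k) := by rw [h]; ring
    rw [tsum_congr this, tsum_neg]
    rfl
  rw [← heq]
  exact key

lemma bF_continuous (γ : ℝ) (hγ : 0 < γ) : Continuous (bF γ) :=
  continuous_iff_continuousAt.2 fun x => (bF_hasDerivAt γ hγ x).continuousAt

lemma bF_zero (γ : ℝ) : bF γ 0 = 1 / Real.Gamma (1 + γ) := by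
  rw [bF, tsum_eq_single 0 (by intro k hk; simp [zero_pow hk])]
  simp [bcoef]

lemma bF_zero_pos (γ : ℝ) (hγ : 0 < γ) : 0 < bF γ 0 := by
  rw [bF_zero]
  have := Real.Gamma_pos_of_pos (show (0:ℝ) < 1 + γ by linarith)
  positivity

lemma Gamma_shift (γ : ℝ) (hγ : 0 < γ) (k : ℕ) :
    Real.Gamma ((k : ℝ) + 2 + γ) = ((k : ℝ) + 1 + γ) * Real.Gamma ((k : ℝ) + 1 + γ) := by
  rw [show ((k : ℝ) + 2 + γ) = ((k : ℝ) + 1 + γ) + 1 by ring]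
  exact Real.Gamma_add_one (by positivity)

lemma bcoef_rec0 (γ : ℝ) (hγ : 0 < γ) : bcoef γ 0 = (γ + 1) * bcoef (γ + 1) 0 := by
  have h : Real.Gamma ((0:ℝ) + 1 + (γ+1)) = (1 + γ) * Real.Gamma (1 + γ) := by
    rw [show ((0:ℝ) + 1 + (γ+1)) = (1 + γ) + 1 by ring]
    exact Real.Gamma_add_one (by positivity)
  have hΓ : 0 < Real.Gamma (1 + γ) := Real.Gamma_pos_of_pos (by positivity)
  simp only [bcoef, Nat.cast_zero, Nat.factorial_zero, Nat.cast_one, pow_zero, one_mul, h]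
  rw [show ((0:ℝ) + 1 + γ) = 1 + γ by ring]
  field_simp
  ring

lemma bcoef_rec (γ : ℝ) (hγ : 0 < γ) (k : ℕ) :
    bcoef γ (k+1) + bcoef (γ+2) k = (γ + 1) * bcoef (γ+1) (k+1) := by
  have harg1 : (((k+1:ℕ) : ℝ) + 1 + γ) = (k : ℝ) + 2 + γ := by push_cast; ring
  have harg2 : ((k : ℝ) + 1 + (γ+2)) = ((k : ℝ) + 2 + γ) + 1 := by ring
  have harg3 : (((k+1:ℕ) : ℝ) + 1 + (γ+1)) = ((k : ℝ) + 2 + γ) + 1 := by push_cast; ring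
  have hΓ2pos : 0 < Real.Gamma ((k : ℝ) + 2 + γ) := Real.Gamma_pos_of_pos (by positivity)
  have hG : Real.Gamma (((k : ℝ) + 2 + γ) + 1) = ((k : ℝ) + 2 + γ) * Real.Gamma ((k : ℝ) + 2 + γ) :=
    Real.Gamma_add_one (by positivity)
  have hfact : ((Nat.factorial (k+1) : ℝ)) = ((k : ℝ) + 1) * Nat.factorial k := by
    rw [Nat.factorial_succ]; push_cast; ring
  simp only [bcoef, harg1, harg2, harg3, hG, hfact, pow_succ]
  have hf : (Nat.factorial k : ℝ) ≠ 0 := by exact_mod_cast (Nat.factorial_pos k).ne'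
  field_simp
  ring

lemma bF_rec (γ : ℝ) (hγ : 0 < γ) (x : ℝ) :
    bF γ x + x * bF (γ+2) x = (γ + 1) * bF (γ+1) x := by
  have h2 : x * bF (γ+2) x = ∑' k : ℕ, bcoef (γ+2) k * x ^ (k+1) := by
    rw [bF, ← tsum_mul_left]
    exact tsum_congr fun k => by ring
  set g : ℕ → ℝ := fun k => Nat.casesOn k 0 (fun j => bcoef (γ+2) j * x ^ (j+1)) with hg
  have hg_sum : Summable g := by
    rw [← summable_nat_add_iff 1]
    have : Summable (fun k : ℕ => x * (bcoef (γ+2) k * x ^ k)) := (bF_summable (γ+2) (by linarith) x).mul_left x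
    apply this.congr
    intro k
    simp [hg]; ring
  have h3 : x * bF (γ+2) x = ∑' k : ℕ, g k := by
    rw [h2, hg_sum.tsum_eq_zero_add]
    simp [hg]
  rw [h3, bF, ← (bF_summable γ hγ x).tsum_add hg_sum]
  have h4 : (γ + 1) * bF (γ+1) x = ∑' k : ℕ, (γ+1) * (bcoef (γ+1) k * x ^ k) := by
    rw [bF, ← tsum_mul_left]
  rw [h4]
  apply tsum_congr
  rintro (_ | k)
  · simp [hg, bcoef_rec0 γ hγ]
  · simp only [hg]
    have := bcoef_rec γ hγ k
    calc bcoef γ (k+1) * x ^ (k+1) + bcoef (γ+2) k * x ^ (k+1)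
        = (bcoef γ (k+1) + bcoef (γ+2) k) * x ^ (k+1) := by ring
      _ = (γ+1) * (bcoef (γ+1) (k+1) * x ^ (k+1)) := by rw [this]; ring

lemma bF_pos_of_large (γ c : ℝ) (hγ : 0 < γ) (hc : 0 < c) (hlarge : 2 * c < 1 + γ) :
    0 < bF γ c := by
  have hΓ1 : 0 < Real.Gamma (1 + γ) := Real.Gamma_pos_of_pos (by positivity)
  set C : ℝ := 1 / Real.Gamma (1 + γ) with hC
  have hCpos : 0 < C := by positivity
  set q : ℝ := c / (1 + γ) with hq
  have hq0 : 0 < q := by positivity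
  have hq2 : q < 1/2 := by rw [hq, div_lt_iff₀ (by linarith)]; linarith
  have hsum := bF_summable γ hγ c
  have hbF : bF γ c = bcoef γ 0 + ∑' k : ℕ, bcoef γ (k+1) * c ^ (k+1) := by
    simpa [bF] using hsum.tsum_eq_zero_add
  have hterm : ∀ k : ℕ, ‖bcoef γ (k+1) * c ^ (k+1)‖ ≤ C * q ^ (k+1) := by
    intro k
    have hb := bcoef_abs_le γ hγ (k+1)
    have hfk : (1:ℝ) ≤ Nat.factorial (k+1) := by exact_mod_cast Nat.succ_le_of_lt (Nat.factorial_pos (k+1))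
    rw [Real.norm_eq_abs, abs_mul, abs_pow, abs_of_pos hc]
    calc |bcoef γ (k+1)| * c ^ (k+1)
        ≤ (1 / (Nat.factorial (k+1) * Real.Gamma (1 + γ) * (1 + γ) ^ (k+1))) * c ^ (k+1) :=
          mul_le_mul_of_nonneg_right hb (by positivity)
      _ ≤ (1 / (Real.Gamma (1 + γ) * (1 + γ) ^ (k+1))) * c ^ (k+1) := by
          apply mul_le_mul_of_nonneg_right _ (by positivity)
          apply one_div_le_one_div_of_le (by positivity)
          have hp : (0:ℝ) < Real.Gamma (1 + γ) * (1 + γ) ^ (k+1) := by positivity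
          have hfk : (1:ℝ) ≤ Nat.factorial (k+1) := by
            exact_mod_cast Nat.succ_le_of_lt (Nat.factorial_pos (k+1))
          nlinarith
      _ = C * q ^ (k+1) := by
          rw [hC, hq, div_pow]
          field_simp
  have hgeo : Summable (fun k : ℕ => C * q ^ (k+1)) := by
    apply Summable.mul_left
    exact ((summable_geometric_of_lt_one hq0.le (by linarith)).comp_injective (add_left_injective 1))
  have habs : Summable (fun k : ℕ => ‖bcoef γ (k+1) * c ^ (k+1)‖) :=
    Summable.of_nonneg_of_le (fun k => norm_nonneg _) hterm hgeo
  have hnorm : ‖∑' k : ℕ, bcoef γ (k+1) * c ^ (k+1)‖ ≤ ∑' k : ℕ, C * q ^ (k+1) :=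
    le_trans (norm_tsum_le_tsum_norm habs) (Summable.tsum_le_tsum hterm habs hgeo)
  have hgeoval : ∑' k : ℕ, C * q ^ (k+1) = C * q * (1 - q)⁻¹ := by
    calc ∑' k : ℕ, C * q ^ (k+1) = ∑' k : ℕ, (C * q) * q ^ k := by
          apply tsum_congr; intro k; ring
      _ = (C * q) * ∑' k : ℕ, q ^ k := tsum_mul_left
      _ = C * q * (1 - q)⁻¹ := by rw [tsum_geometric_of_lt_one hq0.le (by linarith)]
  have hlt : C * q * (1 - q)⁻¹ < C := by
    rw [mul_inv_lt_iff₀ (by linarith)]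
    nlinarith
  have h0 : bcoef γ 0 = C := by simp [bcoef, hC]
  have := abs_le.1 (le_trans (le_of_eq (Real.norm_eq_abs _).symm) (hnorm.trans hgeoval.le))
  rw [hbF, h0]
  linarith [this.1]

lemma bF_succ_zero (γ : ℝ) (hγ : 0 < γ) (c : ℝ) (hc : 0 < c)
    (h1 : bF γ c = 0) (h2 : bF (γ+1) c = 0) : bF (γ+2) c = 0 := by
  have := bF_rec γ hγ c
  rw [h1, h2] at this
  simp at this
  rcases this with h | h
  · linarith
  · exact h

lemma bF_no_common_zero (γ : ℝ) (hγ : 0 < γ) (c : ℝ) (hc : 0 < c)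
    (h1 : bF γ c = 0) (h2 : bF (γ+1) c = 0) : False := by
  have H : ∀ n : ℕ, bF (γ + n) c = 0 ∧ bF (γ + n + 1) c = 0 := by
    intro n
    induction n with
    | zero => simpa using ⟨h1, h2⟩
    | succ n ih =>
      have hord : 0 < γ + n := by positivity
      have h3 := bF_succ_zero (γ + n) hord c hc ih.1 ih.2
      constructor
      · rw [show (γ + ((n:ℕ)+1:ℕ) : ℝ) = γ + n + 1 by push_cast; ring]; exact ih.2
      · rw [show (γ + ((n:ℕ)+1:ℕ) + 1 : ℝ) = γ + n + 2 by push_cast; ring]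
        exact h3
  obtain ⟨n, hn⟩ := exists_nat_gt (2 * c)
  have hord : 0 < γ + n := by positivity
  have := bF_pos_of_large (γ + n) c hord hc (by linarith)
  rw [(H n).1] at this
  exact lt_irrefl 0 this

lemma bF_zeros_finite (γ : ℝ) (hγ : 0 < γ) (X : ℝ) :
    {x : ℝ | x ∈ Set.Ioo 0 X ∧ bF γ x = 0}.Finite := by
  by_contra hinf
  rw [← Set.not_infinite] at hinf
  rw [not_not] at hinf
  obtain ⟨c, hcK, hacc⟩ := hinf.exists_accPt_of_subset_isCompact isCompact_Icc
    (fun x hx => Set.mem_Icc.2 ⟨hx.1.1.le, hx.1.2.le⟩)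
  have hfreq := accPt_iff_frequently.1 hacc
  have hc0 : bF γ c = 0 := by
    apply tendsto_nhds_unique_of_frequently_eq ((bF_continuous γ hγ).continuousAt) tendsto_const_nhds
    exact hfreq.mono (fun y hy => hy.2.2)
  have hcpos : 0 < c := by
    rcases eq_or_lt_of_le hcK.1 with h | h
    · exfalso
      have := bF_zero_pos γ hγ
      rw [← h] at hc0
      linarith
    · exact h
  have hd : bF (γ+1) c ≠ 0 := fun h => bF_no_common_zero γ hγ c hcpos hc0 h
  have hder := (hasDerivAt_iff_tendsto_slope).1 (bF_hasDerivAt γ hγ c)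
  have hfreq' : ∃ᶠ y in nhdsWithin c {c}ᶜ, slope (bF γ) c y = 0 := by
    rw [frequently_nhdsWithin_iff]
    apply hfreq.mono
    rintro y ⟨hyne, hy⟩
    exact ⟨by simp [slope, hy.2, hc0], by simpa using hyne⟩
  have : -bF (γ+1) c = 0 :=
    tendsto_nhds_unique_of_frequently_eq hder tendsto_const_nhds hfreq'
  exact hd (by linarith)

lemma sign_const_pos {f : ℝ → ℝ} (hf : Continuous f) {a b : ℝ} (hab : a ≤ b)
    (h : ∀ x ∈ Set.Icc a b, f x ≠ 0) (hb : 0 < f b) : ∀ x ∈ Set.Icc a b, 0 < f x := by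
  intro x hx
  rcases lt_trichotomy (f x) 0 with hneg | hzero | hpos
  · exfalso
    have h0 : (0:ℝ) ∈ Set.uIcc (f x) (f b) := by
      rw [Set.mem_uIcc]; left; exact ⟨hneg.le, hb.le⟩
    obtain ⟨y, hy, hfy⟩ := intermediate_value_uIcc (hf.continuousOn) h0
    have hyIcc : y ∈ Set.Icc a b := by
      have : Set.uIcc x b ⊆ Set.Icc a b := Set.uIcc_subset_Icc hx (Set.mem_Icc.2 ⟨hab, le_refl b⟩)
      exact this hy
    exact h y hyIcc hfy
  · exact absurd hzero (h x hx)
  · exact hpos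

lemma sign_const_neg {f : ℝ → ℝ} (hf : Continuous f) {a b : ℝ} (hab : a ≤ b)
    (h : ∀ x ∈ Set.Icc a b, f x ≠ 0) (hb : f b < 0) : ∀ x ∈ Set.Icc a b, f x < 0 := by
  intro x hx
  have := sign_const_pos (f := fun y => -f y) (hf.neg) hab
    (fun y hy => neg_ne_zero.2 (h y hy)) (by simpa using hb) x hx
  linarith

/-- `s` is a finset of positive zeros of `bF γ`. -/
def ZS (γ : ℝ) (s : Finset ℝ) : Prop := ∀ y ∈ s, 0 < y ∧ bF γ y = 0

lemma rolle_step (γ : ℝ) (hγ : 0 < γ) :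
    ∀ n : ℕ, ∀ s : Finset ℝ, s.card = n → ∀ hs : s.Nonempty, ZS γ s →
    ∃ u : Finset ℝ, u.card = n - 1 ∧ ZS (γ+1) u ∧ ∀ y ∈ u, y < s.max' hs := by
  intro n
  induction n with
  | zero => intro s hcard hs _; exact absurd hcard (by simp [Finset.card_ne_zero_of_mem hs.choose_spec])
  | succ n ih =>
    intro s hcard hs hzs
    rcases Nat.eq_zero_or_pos n with hn | hn
    · exact ⟨∅, by simp [hn], by intro y hy; simp at hy, by intro y hy; simp at hy⟩
    · set M := s.max' hs with hM
      have hMs : M ∈ s := s.max'_mem hs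
      set s' := s.erase M with hs'
      have hcard' : s'.card = n := by rw [hs', Finset.card_erase_of_mem hMs, hcard]; omega
      have hs'ne : s'.Nonempty := Finset.card_pos.1 (by omega)
      set M2 := s'.max' hs'ne with hM2
      have hM2s' : M2 ∈ s' := s'.max'_mem hs'ne
      have hM2s : M2 ∈ s := Finset.mem_of_mem_erase hM2s'
      have hM2M : M2 < M := by
        rcases lt_or_eq_of_le (s.le_max' M2 hM2s) with h | h
        · exact h
        · exfalso
          rw [h] at hM2s'
          exact Finset.notMem_erase (s.max' hs) s hM2s'
      have hM2pos : 0 < M2 := (hzs M2 hM2s).1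
      -- Rolle between M2 and M
      obtain ⟨c, hcmem, hc0⟩ := exists_hasDerivAt_eq_zero hM2M
        ((bF_continuous γ hγ).continuousOn) (by rw [(hzs M2 hM2s).2, (hzs M hMs).2])
        (fun x _ => bF_hasDerivAt γ hγ x)
      have hczero : bF (γ+1) c = 0 := by linarith [neg_eq_zero.1 hc0]
      obtain ⟨u', hu'card, hu'zs, hu'lt⟩ := ih s' hcard' hs'ne
        (fun y hy => hzs y (Finset.mem_of_mem_erase hy))
      have hcnot : c ∉ u' := fun h => absurd (hu'lt c h) (not_lt.2 hcmem.1.le)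
      refine ⟨insert c u', ?_, ?_, ?_⟩
      · rw [Finset.card_insert_of_notMem hcnot, hu'card]; omega
      · intro y hy
        rcases Finset.mem_insert.1 hy with h | h
        · exact h ▸ ⟨lt_trans hM2pos hcmem.1, hczero⟩
        · exact hu'zs y h
      · intro y hy
        rcases Finset.mem_insert.1 hy with h | h
        · exact h ▸ hcmem.2
        · exact lt_trans (hu'lt y h) hM2M

lemma signA (γ : ℝ) (hγ : 0 < γ) (c b : ℝ) (hc : 0 < c) (hcb : c < b)
    (hzc : bF (γ+1) c = 0) (hzb : bF γ b = 0) :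
    ∃ d, c ≤ d ∧ d < b ∧ bF (γ+2) d = 0 := by
  by_contra hcon
  push_neg at hcon
  have hγ1 : 0 < γ + 1 := by linarith
  set T := {x : ℝ | x ∈ Set.Icc c b ∧ bF (γ+1) x = 0} with hT
  have hTclosed : IsClosed T := by
    apply IsClosed.inter isClosed_Icc
    exact isClosed_eq (bF_continuous (γ+1) hγ1) continuous_const
  have hTne : T.Nonempty := ⟨c, Set.mem_Icc.2 ⟨le_refl c, hcb.le⟩, hzc⟩
  have hTbdd : BddAbove T := ⟨b, fun x hx => hx.1.2⟩
  set cs := sSup T with hcs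
  have hcsT : cs ∈ T := hTclosed.csSup_mem hTne hTbdd
  have hcT : c ∈ T := ⟨Set.mem_Icc.2 ⟨le_refl c, hcb.le⟩, hzc⟩
  have hccs : c ≤ cs := le_csSup hTbdd hcT
  have hcsb : cs ≤ b := hcsT.1.2
  have hcspos : 0 < cs := lt_of_lt_of_le hc hccs
  have hcsz : bF (γ+1) cs = 0 := hcsT.2
  have hcsb' : cs < b := by
    rcases lt_or_eq_of_le hcsb with h | h
    · exact h
    · exact absurd (h ▸ hcsz) (fun hh => bF_no_common_zero γ hγ b (hc.trans hcb) hzb hh)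
  -- bF (γ+1) has no zero in (cs, b]
  have hnz1 : ∀ x, cs < x → x ≤ b → bF (γ+1) x ≠ 0 := by
    intro x hx1 hx2 hx0
    have : x ∈ T := ⟨Set.mem_Icc.2 ⟨hccs.trans hx1.le, hx2⟩, hx0⟩
    exact absurd (le_csSup hTbdd this) (not_le.2 hx1)
  -- bF (γ+2) has no zero in [cs, b]
  have hnz2 : ∀ x ∈ Set.Icc cs b, bF (γ+2) x ≠ 0 := by
    intro x hx hx0
    rcases lt_or_eq_of_le hx.2 with h | h
    · exact hcon x (hccs.trans hx.1) h hx0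
    · -- x = b : bF (γ+2) b = (γ+1) bF (γ+1) b / b ≠ 0
      have hrec := bF_rec γ hγ b
      rw [h] at hx0
      rw [hzb, hx0] at hrec
      exact hnz1 b hcsb' (le_refl b) (by
        have hb0 : (0:ℝ) < b := hc.trans hcb
        have h5 : (γ+1) * bF (γ+1) b = 0 := by linarith
        rcases mul_eq_zero.1 h5 with h' | h'
        · linarith
        · exact h')
  have hb0 : (0:ℝ) < b := hc.trans hcb
  -- value of bF (γ+2) at b in terms of bF (γ+1) b
  have hrecb : b * bF (γ+2) b = (γ+1) * bF (γ+1) b := by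
    have := bF_rec γ hγ b
    rw [hzb] at this
    linarith
  have h1b : bF (γ+1) b ≠ 0 := hnz1 b hcsb' (le_refl b)
  -- strict monotonicity setup
  have hcont : ContinuousOn (bF γ) (Set.Icc cs b) := (bF_continuous γ hγ).continuousOn
  have hderiv : ∀ x ∈ interior (Set.Icc cs b), deriv (bF γ) x = -bF (γ+1) x := by
    intro x _
    exact (bF_hasDerivAt γ hγ x).deriv
  have hreccs : bF γ cs = - (cs * bF (γ+2) cs) := by
    have := bF_rec γ hγ cs
    rw [hcsz] at this
    linarith
  rcases lt_or_gt_of_ne h1b with hneg | hpos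
  · -- bF (γ+1) b < 0
    have h2b : bF (γ+2) b < 0 := by nlinarith
    have h2all : ∀ x ∈ Set.Icc cs b, bF (γ+2) x < 0 :=
      sign_const_neg (bF_continuous (γ+2) (by linarith)) hcsb hnz2 h2b
    have h1all : ∀ x ∈ Set.Ioo cs b, 0 < -bF (γ+1) x := by
      intro x hx
      have := sign_const_neg (bF_continuous (γ+1) hγ1) hx.2.le
        (fun y hy => hnz1 y (lt_of_lt_of_le hx.1 hy.1) hy.2) hneg x (Set.mem_Icc.2 ⟨le_refl x, hx.2.le⟩)
      linarith
    have hmono : StrictMonoOn (bF γ) (Set.Icc cs b) := by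
      apply strictMonoOn_of_deriv_pos (convex_Icc cs b) hcont
      intro x hx
      rw [interior_Icc] at hx
      rw [(bF_hasDerivAt γ hγ x).deriv]
      exact h1all x hx
    have hcs_val : 0 < bF γ cs := by
      have := h2all cs (Set.mem_Icc.2 ⟨le_refl cs, hcsb⟩)
      nlinarith
    have := hmono (Set.mem_Icc.2 ⟨le_refl cs, hcsb⟩) (Set.mem_Icc.2 ⟨hcsb, le_refl b⟩) hcsb'
    rw [hzb] at this
    linarith
  · -- bF (γ+1) b > 0
    have h2b : 0 < bF (γ+2) b := by nlinarith
    have h2all : ∀ x ∈ Set.Icc cs b, 0 < bF (γ+2) x :=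
      sign_const_pos (bF_continuous (γ+2) (by linarith)) hcsb hnz2 h2b
    have h1all : ∀ x ∈ Set.Ioo cs b, -bF (γ+1) x < 0 := by
      intro x hx
      have := sign_const_pos (bF_continuous (γ+1) hγ1) hx.2.le
        (fun y hy => hnz1 y (lt_of_lt_of_le hx.1 hy.1) hy.2) hpos x (Set.mem_Icc.2 ⟨le_refl x, hx.2.le⟩)
      linarith
    have hmono : StrictAntiOn (bF γ) (Set.Icc cs b) := by
      apply strictAntiOn_of_deriv_neg (convex_Icc cs b) hcont
      intro x hx
      rw [interior_Icc] at hx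
      rw [(bF_hasDerivAt γ hγ x).deriv]
      exact h1all x hx
    have hcs_val : bF γ cs < 0 := by
      have := h2all cs (Set.mem_Icc.2 ⟨le_refl cs, hcsb⟩)
      nlinarith
    have := hmono (Set.mem_Icc.2 ⟨le_refl cs, hcsb⟩) (Set.mem_Icc.2 ⟨hcsb, le_refl b⟩) hcsb'
    rw [hzb] at this
    linarith

lemma stepB (γ : ℝ) (hγ : 0 < γ) (s : Finset ℝ) (h2 : 2 ≤ s.card) (hzs : ZS γ s) :
    ∃ u : Finset ℝ, u.card = s.card - 1 ∧ ZS (γ+2) u ∧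
      ∀ y ∈ u, y < s.max' (Finset.card_pos.1 (by omega)) := by
  have hs : s.Nonempty := Finset.card_pos.1 (by omega)
  obtain ⟨u1, hu1card, hu1zs, hu1lt⟩ := rolle_step γ hγ s.card s rfl hs hzs
  have hu1ne : u1.Nonempty := Finset.card_pos.1 (by omega)
  set c := u1.max' hu1ne with hc
  have hcmem : c ∈ u1 := u1.max'_mem hu1ne
  have hcpos : 0 < c := (hu1zs c hcmem).1
  have hczero : bF (γ+1) c = 0 := (hu1zs c hcmem).2
  set M := s.max' hs with hM
  have hcM : c < M := hu1lt c hcmem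
  have hMzero : bF γ M = 0 := (hzs M (s.max'_mem hs)).2
  obtain ⟨d, hdc, hdM, hdzero⟩ := signA γ hγ c M hcpos hcM hczero hMzero
  obtain ⟨u2, hu2card, hu2zs, hu2lt⟩ := rolle_step (γ+1) (by linarith) u1.card u1 rfl hu1ne
    hu1zs
  have hu2zs' : ZS (γ+2) u2 := by
    intro y hy
    have := hu2zs y hy
    rwa [show γ + 1 + 1 = γ + 2 by ring] at this
  have hdnot : d ∉ u2 := fun h => absurd (hu2lt d h) (not_lt.2 hdc)
  refine ⟨insert d u2, ?_, ?_, ?_⟩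
  · rw [Finset.card_insert_of_notMem hdnot, hu2card, hu1card]; omega
  · intro y hy
    rcases Finset.mem_insert.1 hy with h | h
    · exact h ▸ ⟨lt_of_lt_of_le hcpos hdc, hdzero⟩
    · exact hu2zs' y h
  · intro y hy
    rcases Finset.mem_insert.1 hy with h | h
    · exact h ▸ hdM
    · exact lt_trans (lt_of_lt_of_le (hu2lt y h) hdc) hdM

lemma iterB (j : ℕ) : ∀ γ : ℝ, 0 < γ → ∀ s : Finset ℝ, ZS γ s → j + 2 ≤ s.card →
    ∀ X : ℝ, (∀ y ∈ s, y ≤ X) →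
    ∃ u : Finset ℝ, u.card = s.card - (j+1) ∧ ZS (γ + 2*((j:ℝ)+1)) u ∧ ∀ y ∈ u, y < X := by
  induction j with
  | zero =>
    intro γ hγ s hzs hcard X hX
    obtain ⟨u, hucard, huzs, hult⟩ := stepB γ hγ s (by omega) hzs
    refine ⟨u, hucard, ?_, ?_⟩
    · intro y hy
      have := huzs y hy
      rwa [show γ + 2 = γ + 2*((0:ℕ)+1:ℝ) by push_cast; ring] at this
    · intro y hy
      exact lt_of_lt_of_le (hult y hy) (hX _ (s.max'_mem _))
  | succ j ih =>
    intro γ hγ s hzs hcard X hX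
    obtain ⟨u1, hu1card, hu1zs, hu1lt⟩ := stepB γ hγ s (by omega) hzs
    have hu1le : ∀ y ∈ u1, y ≤ X :=
      fun y hy => (lt_of_lt_of_le (hu1lt y hy) (hX _ (s.max'_mem _))).le
    obtain ⟨u, hucard, huzs, hult⟩ := ih (γ+2) (by linarith) u1 hu1zs (by omega) X hu1le
    refine ⟨u, by rw [hucard, hu1card]; omega, ?_, hult⟩
    intro y hy
    have := huzs y hy
    rwa [show γ + 2 + 2*((j:ℝ)+1) = γ + 2*(((j+1:ℕ):ℝ)+1) by push_cast; ring] at this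

/-- The Bessel function of the first kind of order `β`,
`𝒥_β(r) = Σ_{k=0}^∞ (−1)^k/(k!·Γ(k+1+β)) · (r/2)^{2k+β}`. -/
noncomputable def besselJ (β r : ℝ) : ℝ :=
  ∑' k : ℕ, ((-1 : ℝ) ^ k / (Nat.factorial k * Real.Gamma ((k : ℝ) + 1 + β))) *
    (r / 2) ^ (2 * (k : ℝ) + β)

/-- `z` is the `m`-th positive zero of `𝒥_β`: it is a positive zero of `𝒥_β` and
there are exactly `m − 1` zeros of `𝒥_β` in `(0, z)`. -/
def IsNthPosZero (β : ℝ) (m : ℕ) (z : ℝ) : Prop :=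
  0 < z ∧ besselJ β z = 0 ∧
    Set.ncard {t : ℝ | t ∈ Set.Ioo 0 z ∧ besselJ β t = 0} = m - 1

lemma besselJ_eq_bF (γ t : ℝ) (ht : 0 < t) :
    besselJ γ t = (t/2) ^ γ * bF γ ((t/2)^2) := by
  rw [besselJ, bF, ← tsum_mul_left]
  apply tsum_congr
  intro k
  have hs : (0:ℝ) < t/2 := by linarith
  have h1 : (t/2) ^ (2*(k:ℝ) + γ) = (t/2)^(2*(k:ℝ)) * (t/2)^γ := Real.rpow_add hs _ _
  have h2 : (t/2) ^ (2*(k:ℝ)) = ((t/2)^2)^k := by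
    rw [show 2*(k:ℝ) = ((2*k : ℕ) : ℝ) by push_cast; ring, Real.rpow_natCast, pow_mul]
  rw [h1, h2, bcoef]; ring

lemma besselJ_zero_iff (γ t : ℝ) (ht : 0 < t) :
    besselJ γ t = 0 ↔ bF γ ((t/2)^2) = 0 := by
  rw [besselJ_eq_bF γ t ht]
  have hpos : (0:ℝ) < (t/2) ^ γ := Real.rpow_pos_of_pos (by linarith) γ
  constructor
  · intro h
    rcases mul_eq_zero.1 h with h' | h'
    · exact absurd h' hpos.ne'
    · exact h'
  · intro h; rw [h, mul_zero]

lemma besselJ_zeros_finite (γ : ℝ) (hγ : 0 < γ) (w : ℝ) :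
    {t : ℝ | t ∈ Set.Ioo 0 w ∧ besselJ γ t = 0}.Finite := by
  set φ : ℝ → ℝ := fun t => (t/2)^2 with hφ
  set S := {t : ℝ | t ∈ Set.Ioo 0 w ∧ besselJ γ t = 0} with hS
  have hinj : Set.InjOn φ S := by
    intro t1 h1 t2 h2 heq
    simp only [hφ] at heq
    have h1p : 0 < t1 := h1.1.1
    have h2p : 0 < t2 := h2.1.1
    have : (t1 - t2) * (t1 + t2) = 0 := by nlinarith
    rcases mul_eq_zero.1 this with h | h
    · linarith
    · linarith
  apply Set.Finite.of_finite_image _ hinj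
  apply (bF_zeros_finite γ hγ ((w/2)^2)).subset
  rintro x ⟨t, ht, rfl⟩
  have htpos : 0 < t := ht.1.1
  refine ⟨⟨by positivity, ?_⟩, (besselJ_zero_iff γ t htpos).1 ht.2⟩
  have : t/2 < w/2 := by linarith [ht.1.2]
  have h2 : (0:ℝ) ≤ t/2 := by linarith
  simp only [hφ]
  exact pow_lt_pow_left₀ this h2 (by norm_num)

/-- If `z` is the `m`-th positive zero of `𝒥_β` and `z'` is the `i`-th positive zero of
`𝒥_{β+2(m−i)}`, with `1 ≤ i < m` and `β > 0`, then `z' < z`. -/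
theorem bessel_zero_estimate (β : ℝ) (hβ : 0 < β) (i m : ℕ) (hi : 1 ≤ i) (him : i < m)
    (z z' : ℝ) (hz : IsNthPosZero β m z)
    (hz' : IsNthPosZero (β + 2 * ((m : ℝ) - (i : ℝ))) i z') :
    z' < z := by
  by_contra hcon
  push_neg at hcon
  obtain ⟨hzpos, hzzero, hzcard⟩ := hz
  obtain ⟨hz'pos, hz'zero, hz'card⟩ := hz'
  set d : ℕ := m - i with hd
  have hd1 : 1 ≤ d := by omega
  have hdr : ((m:ℝ) - (i:ℝ)) = (d:ℝ) := by
    rw [hd, Nat.cast_sub him.le]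
  set β' := β + 2 * ((m : ℝ) - (i : ℝ)) with hβ'
  have hβ'pos : 0 < β' := by
    rw [hβ', hdr]
    have : (0:ℝ) ≤ (d:ℝ) := Nat.cast_nonneg d
    linarith
  set Z : ℝ := (z/2)^2 with hZ
  set Z' : ℝ := (z'/2)^2 with hZ'
  have hZpos : 0 < Z := by positivity
  have hZZ' : Z ≤ Z' := by
    rw [hZ, hZ']
    have : z/2 ≤ z'/2 := by linarith
    apply pow_le_pow_left₀ (by linarith) this
  set φ : ℝ → ℝ := fun t => (t/2)^2 with hφ
  set S := {t : ℝ | t ∈ Set.Ioo 0 z ∧ besselJ β t = 0} with hS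
  have hSfin : S.Finite := besselJ_zeros_finite β hβ z
  have hsScard : hSfin.toFinset.card = m - 1 := by
    rw [← Set.ncard_eq_toFinset_card S hSfin]
    exact hzcard
  have hφinjS : Set.InjOn φ hSfin.toFinset := by
    intro t1 h1 t2 h2 heq
    rw [Finset.mem_coe, Set.Finite.mem_toFinset] at h1 h2
    simp only [hφ] at heq
    have h1p : 0 < t1 := h1.1.1
    have h2p : 0 < t2 := h2.1.1
    have : (t1 - t2) * (t1 + t2) = 0 := by nlinarith
    rcases mul_eq_zero.1 this with h | h
    · linarith
    · linarith
  classical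
  set s₀ : Finset ℝ := insert Z (hSfin.toFinset.image φ) with hs₀
  have himlt : ∀ y ∈ hSfin.toFinset.image φ, y < Z := by
    intro y hy
    obtain ⟨t, ht, rfl⟩ := Finset.mem_image.1 hy
    rw [Set.Finite.mem_toFinset] at ht
    have htpos : 0 < t := ht.1.1
    simp only [hφ, hZ]
    apply pow_lt_pow_left₀ (by linarith [ht.1.2]) (by linarith) (by norm_num)
  have hZnot : Z ∉ hSfin.toFinset.image φ := fun h => lt_irrefl Z (himlt Z h)
  have hs₀card : s₀.card = m := by
    rw [hs₀, Finset.card_insert_of_notMem hZnot, Finset.card_image_of_injOn hφinjS, hsScard]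
    omega
  have hZSs₀ : ZS β s₀ := by
    intro y hy
    rcases Finset.mem_insert.1 hy with h | h
    · subst h
      exact ⟨hZpos, by
        have := (besselJ_zero_iff β z hzpos).1 hzzero
        exact this⟩
    · obtain ⟨t, ht, rfl⟩ := Finset.mem_image.1 h
      rw [Set.Finite.mem_toFinset] at ht
      have htpos : 0 < t := ht.1.1
      exact ⟨by simp only [hφ]; positivity, (besselJ_zero_iff β t htpos).1 ht.2⟩
  have hbound : ∀ y ∈ s₀, y ≤ Z := by
    intro y hy
    rcases Finset.mem_insert.1 hy with h | h
    · exact h.le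
    · exact (himlt y h).le
  obtain ⟨u, hucard, huzs, hult⟩ := iterB (d-1) β hβ s₀ hZSs₀ (by omega) Z hbound
  have hucard' : u.card = i := by rw [hucard, hs₀card]; omega
  have huzs' : ZS β' u := by
    have hcast : β + 2*(((d-1:ℕ):ℝ)+1) = β' := by
      rw [hβ', hdr, Nat.cast_sub hd1]
      push_cast
      ring
    rwa [hcast] at huzs
  set ψ : ℝ → ℝ := fun x => 2 * Real.sqrt x with hψ
  have hψinj : Set.InjOn ψ u := by
    intro x1 h1 x2 h2 heq
    rw [Finset.mem_coe] at h1 h2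
    have hx1 : 0 < x1 := (huzs' x1 h1).1
    have hx2 : 0 < x2 := (huzs' x2 h2).1
    simp only [hψ] at heq
    have : Real.sqrt x1 = Real.sqrt x2 := by linarith
    exact (Real.sqrt_inj hx1.le hx2.le).1 this
  set u' : Finset ℝ := u.image ψ with hu'
  have hu'card : u'.card = i := by rw [hu', Finset.card_image_of_injOn hψinj, hucard']
  set S' := {t : ℝ | t ∈ Set.Ioo 0 z' ∧ besselJ β' t = 0} with hS'
  have hS'fin : S'.Finite := besselJ_zeros_finite β' hβ'pos z'
  have hsub : ↑u' ⊆ S' := by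
    intro t ht
    rw [Finset.mem_coe, hu', Finset.mem_image] at ht
    obtain ⟨y, hy, rfl⟩ := ht
    have hypos : 0 < y := (huzs' y hy).1
    have hyzero : bF β' y = 0 := (huzs' y hy).2
    have hyZ : y < Z := hult y hy
    have htpos : 0 < ψ y := by
      simp only [hψ]
      have := Real.sqrt_pos.2 hypos
      linarith
    have htz' : ψ y < z' := by
      simp only [hψ]
      have h1 : Real.sqrt y < z'/2 := by
        rw [Real.sqrt_lt' (by linarith : (0:ℝ) < z'/2)]
        calc y < Z := hyZ
          _ ≤ Z' := hZZ'
          _ = (z'/2)^2 := rfl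
      linarith
    refine ⟨⟨htpos, htz'⟩, ?_⟩
    rw [besselJ_zero_iff β' (ψ y) htpos]
    have : (ψ y / 2)^2 = y := by
      simp only [hψ]
      rw [show 2 * Real.sqrt y / 2 = Real.sqrt y by ring]
      exact Real.sq_sqrt hypos.le
    rw [this]
    exact hyzero
  have hle : i ≤ i - 1 := by
    calc i = u'.card := hu'card.symm
      _ = (↑u' : Set ℝ).ncard := (Set.ncard_coe_finset u').symm
      _ ≤ S'.ncard := Set.ncard_le_ncard hsub hS'fin
      _ = i - 1 := hz'card
  omega
end

section
/- Let N ≥ 2 and m ≥ 2 be integers and let α ≥ 0 be a real number. Then Σ_{k=1}^{m−1} (m−k) · Σ_{j=⌊(2+α)(k−1)⌋+1}^{⌊(2+α)k⌋} N_j ≥ Σ_{k=1}^{m−1} (m−k) · Σ_{j=(2+⌊α⌋)(k−1)+1}^{(2+⌊α⌋)k} N_j, where ⌊·⌋ denotes the floor function. -/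
/-- The multiplicity `N_j` of the eigenvalue `j(N+j−2)` of the Laplace–Beltrami operator
on the sphere `S^{N−1}`: `N_0 = 1` and `N_j = (N+2j−2)·(N+j−3)!/((N−2)!·j!)` for `j ≥ 1`. -/
def multSph (N j : ℕ) : ℕ :=
  if j = 0 then 1
  else (N + 2 * j - 2) * Nat.factorial (N + j - 3) / (Nat.factorial (N - 2) * Nat.factorial j)

private lemma swap_aux (g : ℕ → ℕ) (M : ℕ) :
    ∑ k ∈ Finset.Icc 1 M, (M + 1 - k) * g k = ∑ i ∈ Finset.Icc 1 M, ∑ k ∈ Finset.Icc 1 i, g k := by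
  induction M with
  | zero => simp
  | succ n ih =>
    have h1 : ∀ k ∈ Finset.Icc 1 (n + 1), (n + 1 + 1 - k) * g k = (n + 1 - k) * g k + g k := by
      intro k hk
      simp only [Finset.mem_Icc] at hk
      have : n + 1 + 1 - k = (n + 1 - k) + 1 := by omega
      rw [this, add_mul, one_mul]
    rw [Finset.sum_congr rfl h1, Finset.sum_add_distrib,
      Finset.sum_Icc_succ_top (by omega : 1 ≤ n + 1) (fun k => (n + 1 - k) * g k),
      Finset.sum_Icc_succ_top (by omega : 1 ≤ n + 1)
        (fun i => ∑ k ∈ Finset.Icc 1 i, g k)]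
    have h2 : (n + 1 - (n + 1)) * g (n + 1) = 0 := by simp
    rw [h2, add_zero, ih]

private lemma tele_aux (f b : ℕ → ℕ) (hb : Monotone b) (hb0 : b 0 = 0) (i : ℕ) :
    ∑ k ∈ Finset.Icc 1 i, ∑ j ∈ Finset.Icc (b (k - 1) + 1) (b k), f j
      = ∑ j ∈ Finset.Icc 1 (b i), f j := by
  induction i with
  | zero => simp [hb0]
  | succ n ih =>
    rw [Finset.sum_Icc_succ_top (by omega : 1 ≤ n + 1), ih]
    simp only [Nat.add_sub_cancel]
    rw [Finset.Icc_add_one_left_eq_Ioc, ← zero_add 1, Finset.Icc_add_one_left_eq_Ioc, Finset.Icc_add_one_left_eq_Ioc]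
    have h0 : (0 : ℕ) ≤ b n := Nat.zero_le _
    have h1 : b n ≤ b (n + 1) := hb (by omega)
    exact Finset.sum_Ioc_consecutive f h0 h1

private lemma key (f b : ℕ → ℕ) (hb : Monotone b) (hb0 : b 0 = 0) (m : ℕ) (hm : 1 ≤ m) :
    ∑ k ∈ Finset.Icc 1 (m - 1), (m - k) * ∑ j ∈ Finset.Icc (b (k - 1) + 1) (b k), f j
      = ∑ i ∈ Finset.Icc 1 (m - 1), ∑ j ∈ Finset.Icc 1 (b i), f j := by
  have h1 : ∀ k ∈ Finset.Icc 1 (m - 1), (m - k) = (m - 1) + 1 - k := by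
    intro k hk; omega
  calc ∑ k ∈ Finset.Icc 1 (m - 1), (m - k) * ∑ j ∈ Finset.Icc (b (k - 1) + 1) (b k), f j
      = ∑ k ∈ Finset.Icc 1 (m - 1),
          ((m - 1) + 1 - k) * ∑ j ∈ Finset.Icc (b (k - 1) + 1) (b k), f j := by
        exact Finset.sum_congr rfl fun k hk => by rw [h1 k hk]
    _ = ∑ i ∈ Finset.Icc 1 (m - 1), ∑ k ∈ Finset.Icc 1 i,
          ∑ j ∈ Finset.Icc (b (k - 1) + 1) (b k), f j := swap_aux _ _
    _ = ∑ i ∈ Finset.Icc 1 (m - 1), ∑ j ∈ Finset.Icc 1 (b i), f j :=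
        Finset.sum_congr rfl fun i _ => tele_aux f b hb hb0 i

/-- For `N ≥ 2`, `m ≥ 2` and `α ≥ 0`:
`Σ_{k=1}^{m−1} (m−k) · Σ_{j=⌊(2+α)(k−1)⌋+1}^{⌊(2+α)k⌋} N_j
  ≥ Σ_{k=1}^{m−1} (m−k) · Σ_{j=(2+⌊α⌋)(k−1)+1}^{(2+⌊α⌋)k} N_j`. -/
theorem morse_index_sum_lower_bound (N m : ℕ) (hN : 2 ≤ N) (hm : 2 ≤ m) (α : ℝ) (hα : 0 ≤ α) :
    ∑ k ∈ Finset.Icc 1 (m - 1),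
        (m - k) * ∑ j ∈ Finset.Icc (⌊(2 + α) * ((k : ℝ) - 1)⌋₊ + 1)
          ⌊(2 + α) * (k : ℝ)⌋₊, multSph N j
      ≥ ∑ k ∈ Finset.Icc 1 (m - 1),
          (m - k) * ∑ j ∈ Finset.Icc ((2 + ⌊α⌋₊) * (k - 1) + 1)
            ((2 + ⌊α⌋₊) * k), multSph N j := by
  set b : ℕ → ℕ := fun n => ⌊(2 + α) * (n : ℝ)⌋₊ with hbdef
  set c : ℕ → ℕ := fun n => (2 + ⌊α⌋₊) * n with hcdef
  have h2α : (0 : ℝ) ≤ 2 + α := by linarith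
  have hb : Monotone b := by
    intro x y hxy
    exact Nat.floor_le_floor (by
      apply mul_le_mul_of_nonneg_left _ h2α
      exact_mod_cast hxy)
  have hc : Monotone c := fun x y hxy => Nat.mul_le_mul_left _ hxy
  have hb0 : b 0 = 0 := by simp [hbdef]
  have hc0 : c 0 = 0 := by simp [hcdef]
  have hcb : ∀ i, c i ≤ b i := by
    intro i
    apply Nat.le_floor
    simp only [hcdef]
    push_cast
    apply mul_le_mul_of_nonneg_right _ (Nat.cast_nonneg i)
    have := Nat.floor_le hα
    linarith
  have hLHS : ∑ k ∈ Finset.Icc 1 (m - 1),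
      (m - k) * ∑ j ∈ Finset.Icc (⌊(2 + α) * ((k : ℝ) - 1)⌋₊ + 1)
        ⌊(2 + α) * (k : ℝ)⌋₊, multSph N j
      = ∑ k ∈ Finset.Icc 1 (m - 1),
        (m - k) * ∑ j ∈ Finset.Icc (b (k - 1) + 1) (b k), multSph N j := by
    apply Finset.sum_congr rfl
    intro k hk
    simp only [Finset.mem_Icc] at hk
    have : ((k - 1 : ℕ) : ℝ) = (k : ℝ) - 1 := by
      rw [Nat.cast_sub hk.1]; norm_num
    simp [hbdef, this]
  have hRHS : ∑ k ∈ Finset.Icc 1 (m - 1),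
      (m - k) * ∑ j ∈ Finset.Icc ((2 + ⌊α⌋₊) * (k - 1) + 1)
        ((2 + ⌊α⌋₊) * k), multSph N j
      = ∑ k ∈ Finset.Icc 1 (m - 1),
        (m - k) * ∑ j ∈ Finset.Icc (c (k - 1) + 1) (c k), multSph N j := rfl
  rw [hLHS, hRHS, key _ b hb hb0 m (by omega), key _ c hc hc0 m (by omega)]
  apply Finset.sum_le_sum
  intro i _
  apply Finset.sum_le_sum_of_subset
  exact Finset.Icc_subset_Icc_right (hcb i)
end

section
/- Let N ≥ 3 and m ≥ 2 be integers and let α ≥ 0 be a real number. Then Σ_{i=1}^{m−1} (m−i) · Σ_{j=(2+⌊α⌋)(i−1)+1}^{(2+⌊α⌋)i} N_j > m · Σ_{j=1}^{1+⌊α/2⌋} N_j, where ⌊·⌋ denotes the floor function. -/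
lemma Icc_one_eq_Ioc (s x : ℕ) : Finset.Icc (s + 1) x = Finset.Ioc s x := by
  ext y; simp only [Finset.mem_Icc, Finset.mem_Ioc]; omega

/-- Closed form via binomial coefficients. -/
lemma multSph_choose (n j : ℕ) :
    multSph (n + 3) j = Nat.choose (n + j + 2) (n + 2) - Nat.choose (n + j) (n + 2) := by
  cases j with
  | zero =>
    simp [multSph, Nat.choose_self, Nat.choose_eq_zero_of_lt (by omega : n < n + 2)]
  | succ k =>
    have harg1 : n + 3 + 2 * (k + 1) - 2 = n + 2 * k + 3 := by omega
    have harg2 : n + 3 + (k + 1) - 3 = n + k + 1 := by omega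
    have harg3 : n + 3 - 2 = n + 1 := by omega
    have harg4 : n + (k + 1) + 2 = n + k + 3 := by omega
    have harg5 : n + (k + 1) = n + k + 1 := by omega
    simp only [multSph, if_neg (Nat.succ_ne_zero k), harg1, harg2, harg3, harg4, harg5]
    apply Nat.div_eq_of_eq_mul_left (by positivity)
    apply Nat.eq_of_mul_eq_mul_left (show 0 < n + 2 by omega)
    have hC1 : Nat.choose (n + k + 3) (n + 2) * ((n+2).factorial * (k+1).factorial)
        = (n + k + 3).factorial := by
      have h0 := Nat.choose_mul_factorial_mul_factorial (show n + 2 ≤ n + k + 3 by omega)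
      have h : n + k + 3 - (n + 2) = k + 1 := by omega
      rw [h] at h0; linarith [h0]
    have hC2 : Nat.choose (n + k + 1) (n + 2) * ((n+2).factorial * (k+1).factorial)
        = k * (k + 1) * (n + k + 1).factorial := by
      cases k with
      | zero => simp [Nat.choose_eq_zero_of_lt (by omega : n + 1 < n + 2)]
      | succ l =>
        have h0 := Nat.choose_mul_factorial_mul_factorial (show n + 2 ≤ n + l + 2 by omega)
        have h : n + l + 2 - (n + 2) = l := by omega
        rw [h] at h0
        have e : n + (l + 1) + 1 = n + l + 2 := by omega
        rw [e]
        have hf : (l + 1 + 1).factorial = (l + 2) * (l + 1) * l.factorial := by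
          rw [Nat.factorial_succ, Nat.factorial_succ]; ring
        rw [hf]
        calc (n + l + 2).choose (n + 2) * ((n + 2).factorial * ((l + 2) * (l + 1) * l.factorial))
            = ((n + l + 2).choose (n + 2) * (n + 2).factorial * l.factorial) * ((l+2)*(l+1)) := by
              ring
          _ = (n + l + 2).factorial * ((l+2)*(l+1)) := by rw [h0]
          _ = (l + 1) * (l + 1 + 1) * (n + l + 2).factorial := by ring
    have hfac2 : (n + 2).factorial = (n + 2) * (n + 1).factorial := Nat.factorial_succ _
    calc (n + 2) * ((n + 2 * k + 3) * (n + k + 1).factorial)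
        = ((n + k + 3) * ((n + k + 2) * (n + k + 1).factorial))
            - k * (k + 1) * (n + k + 1).factorial := by
          have key : (n + k + 3) * ((n + k + 2) * (n + k + 1).factorial)
              = (n + 2) * ((n + 2 * k + 3) * (n + k + 1).factorial)
                + k * (k + 1) * (n + k + 1).factorial := by ring_nf
          omega
      _ = (n + k + 3).factorial - k * (k + 1) * (n + k + 1).factorial := by
          have hfa : (n + k + 3).factorial
              = (n + k + 3) * ((n + k + 2) * (n + k + 1).factorial) := by
            rw [show n + k + 3 = n + k + 1 + 1 + 1 by omega, Nat.factorial_succ,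
              Nat.factorial_succ]
          rw [hfa]
      _ = ((n + k + 3).choose (n + 2) - (n + k + 1).choose (n + 2))
            * ((n+2).factorial * (k+1).factorial) := by
          rw [Nat.sub_mul, hC1, hC2]
      _ = (n + 2) * (((n + k + 3).choose (n + 2) - (n + k + 1).choose (n + 2))
            * ((n+1).factorial * (k+1).factorial)) := by
          rw [hfac2]; ring

lemma multSph_strictMono (n : ℕ) : StrictMono (multSph (n + 3)) := by
  apply strictMono_nat_of_lt_succ
  intro j
  rw [multSph_choose, multSph_choose]
  have h1 : (n + (j+1) + 2).choose (n + 2)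
      = (n + j + 2).choose (n + 1) + (n + j + 2).choose (n + 2) := by
    rw [show n + (j+1) + 2 = (n + j + 2) + 1 by omega, Nat.choose_succ_succ]
  have h2 : (n + (j+1)).choose (n + 2)
      = (n + j).choose (n + 1) + (n + j).choose (n + 2) := by
    rw [show n + (j+1) = (n + j) + 1 by omega, Nat.choose_succ_succ]
  have h3 : (n + j + 2).choose (n + 1)
      = (n + j + 1).choose n + (n + j + 1).choose (n + 1) := by
    rw [show n + j + 2 = (n + j + 1) + 1 by omega, Nat.choose_succ_succ]
  have h4 : (n + j).choose (n + 1) ≤ (n + j + 1).choose (n + 1) :=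
    Nat.choose_le_choose _ (by omega)
  have h5 : 0 < (n + j + 1).choose n := Nat.choose_pos (by omega)
  have h6 : (n + j).choose (n + 2) ≤ (n + j + 2).choose (n + 2) :=
    Nat.choose_le_choose _ (by omega)
  omega

lemma sum_shift (f : ℕ → ℕ) (s L : ℕ) :
    ∑ j ∈ Finset.Icc (s + 1) (s + L), f j = ∑ j ∈ Finset.Icc 1 L, f (s + j) := by
  rw [← Finset.map_add_left_Icc, Finset.sum_map]
  rfl


/-- For `N ≥ 3`, `m ≥ 2` and `α ≥ 0`:
`Σ_{i=1}^{m−1} (m−i) · Σ_{j=(2+⌊α⌋)(i−1)+1}^{(2+⌊α⌋)i} N_j > m · Σ_{j=1}^{1+⌊α/2⌋} N_j`. -/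
theorem morse_index_comparison (N m : ℕ) (hN : 3 ≤ N) (hm : 2 ≤ m) (α : ℝ) (hα : 0 ≤ α) :
    ∑ i ∈ Finset.Icc 1 (m - 1),
        (m - i) * ∑ j ∈ Finset.Icc ((2 + ⌊α⌋₊) * (i - 1) + 1) ((2 + ⌊α⌋₊) * i), multSph N j
      > m * ∑ j ∈ Finset.Icc 1 (1 + ⌊α / 2⌋₊), multSph N j := by
  obtain ⟨n, rfl⟩ : ∃ n, N = n + 3 := ⟨N - 3, by omega⟩
  set f := multSph (n + 3) with hf
  have hmono := multSph_strictMono n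
  set a := ⌊α⌋₊
  set b := ⌊α / 2⌋₊
  set L := 2 + a with hL
  have hba : 2 * b ≤ a := by
    refine Nat.le_floor ?_
    push_cast
    have := Nat.floor_le (show (0:ℝ) ≤ α / 2 by linarith)
    linarith
  have hbl : 2 * (1 + b) ≤ L := by omega
  set T := ∑ j ∈ Finset.Icc 1 (1 + b), f j with hT
  have base : 2 * T < ∑ j ∈ Finset.Icc 1 L, f j := by
    have hsplit : ∑ j ∈ Finset.Icc 1 (1 + b), f j
        + ∑ j ∈ Finset.Icc (1 + b + 1) (2 * (1 + b)), f j
        = ∑ j ∈ Finset.Icc 1 (2 * (1 + b)), f j := by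
      rw [show (1:ℕ) = 0 + 1 by omega, Icc_one_eq_Ioc, Icc_one_eq_Ioc, Icc_one_eq_Ioc]
      exact Finset.sum_Ioc_consecutive f (by omega) (by omega)
    have hshift : ∑ j ∈ Finset.Icc (1 + b + 1) (2 * (1 + b)), f j
        = ∑ j ∈ Finset.Icc 1 (1 + b), f ((1 + b) + j) := by
      rw [show 2 * (1 + b) = (1 + b) + (1 + b) by omega, sum_shift]
    have hgt : T < ∑ j ∈ Finset.Icc (1 + b + 1) (2 * (1 + b)), f j := by
      rw [hshift, hT]
      apply Finset.sum_lt_sum_of_nonempty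
      · exact ⟨1, by simp⟩
      · intro i _
        exact hmono (by omega)
    have hsub : ∑ j ∈ Finset.Icc 1 (2 * (1 + b)), f j ≤ ∑ j ∈ Finset.Icc 1 L, f j := by
      apply Finset.sum_le_sum_of_subset
      intro x hx
      simp only [Finset.mem_Icc] at *
      omega
    omega
  have hblock : ∀ i, 1 ≤ i → ∑ j ∈ Finset.Icc 1 L, f j
      ≤ ∑ j ∈ Finset.Icc (L * (i - 1) + 1) (L * i), f j := by
    intro i hi
    obtain ⟨i', rfl⟩ : ∃ i', i = i' + 1 := ⟨i - 1, by omega⟩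
    have h2 : L * (i' + 1) = L * i' + L := Nat.mul_succ L i'
    have h3 : i' + 1 - 1 = i' := by omega
    rw [h2, h3, sum_shift]
    apply Finset.sum_le_sum
    intro j _
    exact hmono.monotone (by omega)
  have hcount : ∑ i ∈ Finset.Icc 1 (m - 1), (m - i) *
      ∑ j ∈ Finset.Icc (L * (i - 1) + 1) (L * i), f j
      ≥ ∑ i ∈ Finset.Icc 1 (m - 1), 1 * ∑ j ∈ Finset.Icc 1 L, f j := by
    apply Finset.sum_le_sum
    intro i hi
    simp only [Finset.mem_Icc] at hi
    exact Nat.mul_le_mul (by omega) (hblock i hi.1)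
  have hcard : ∑ i ∈ Finset.Icc 1 (m - 1), 1 * ∑ j ∈ Finset.Icc 1 L, f j
      = (m - 1) * ∑ j ∈ Finset.Icc 1 L, f j := by
    rw [Finset.sum_const, Nat.card_Icc]
    simp
  have final : m * T < (m - 1) * ∑ j ∈ Finset.Icc 1 L, f j := by
    calc m * T ≤ (m - 1) * (2 * T) := by
          have h : m ≤ (m - 1) * 2 := by omega
          calc m * T ≤ ((m-1)*2) * T := Nat.mul_le_mul_right _ h
            _ = (m - 1) * (2 * T) := by ring
      _ < (m - 1) * ∑ j ∈ Finset.Icc 1 L, f j :=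
          mul_lt_mul_of_pos_left base (by omega : 0 < m - 1)
  calc m * T < (m - 1) * ∑ j ∈ Finset.Icc 1 L, f j := final
    _ ≤ _ := by rw [← hcard]; exact hcount
end

section
/- Let N ≥ 2 be an integer, α > 0 a real number, and n ≥ 1 an integer. Then (2/(2+α))²·n(N−2+n) < (2N−2+α)/(2+α) if and only if n ≤ ⌈α/2⌉, where ⌈·⌉ denotes the ceiling function. -/
/-- For `N ≥ 2`, `α > 0` and an integer `n ≥ 1`:
`(2/(2+α))²·n(N−2+n) < (2N−2+α)/(2+α)` if and only if `n ≤ ⌈α/2⌉`. -/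
theorem eigenvalue_below_threshold (N : ℕ) (hN : 2 ≤ N) (α : ℝ) (hα : 0 < α)
    (n : ℕ) (hn : 1 ≤ n) :
    (2 / (2 + α)) ^ 2 * ((n : ℝ) * ((N : ℝ) - 2 + (n : ℝ))) < (2 * (N : ℝ) - 2 + α) / (2 + α)
      ↔ (n : ℤ) ≤ ⌈α / 2⌉ := by
  have hβ : (0:ℝ) < 2 + α := by linarith
  have hN' : (2:ℝ) ≤ N := by exact_mod_cast hN
  have hn' : (1:ℝ) ≤ n := by exact_mod_cast hn
  rw [Int.le_ceil_iff]
  push_cast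
  rw [div_pow, div_mul_eq_mul_div, div_lt_div_iff₀ (by positivity) hβ]
  have hq : (2:ℝ)^2 * ((n:ℝ) * ((N:ℝ) - 2 + n)) * (2+α) < (2*(N:ℝ)-2+α) * (2+α)^2
      ↔ 4*(n:ℝ)*((N:ℝ)-2+n) < (2+α)^2 + (2+α)*(2*(N:ℝ)-4) := by
    constructor
    · intro h
      have h' : (4*(n:ℝ)*((N:ℝ)-2+n)) * (2+α)
          < ((2+α)^2 + (2+α)*(2*(N:ℝ)-4)) * (2+α) := by linear_combination h
      exact (mul_lt_mul_iff_left₀ hβ).mp h'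
    · intro h
      nlinarith [mul_pos hβ hβ]
  rw [hq]
  constructor
  · intro h
    by_contra hc
    push_neg at hc
    have h1 : (0:ℝ) ≤ 2*(n:ℝ) - 2 - α := by linarith
    have h2 : (0:ℝ) ≤ (2+α) + 2*(n:ℝ) + 2*(N:ℝ) - 4 := by linarith
    nlinarith [mul_nonneg h1 h2]
  · intro h
    have h1 : (0:ℝ) < (2+α) - 2*(n:ℝ) := by linarith
    have h2 : (0:ℝ) < (2+α) + 2*(n:ℝ) + 2*(N:ℝ) - 4 := by linarith
    nlinarith [mul_pos h1 h2]
end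

section
/- Let N ≥ 2 be an integer and α ≥ 0, p > 1 be real numbers, and set M = 2(N+α)/(2+α). Suppose u : (0,1) → ℝ is twice differentiable and satisfies u''(r) + ((N−1)/r)·u'(r) + r^α·|u(r)|^{p−1}u(r) = 0 for every r ∈ (0,1). Define w : (0,1) → ℝ by w(t) = u(t^{2/(2+α)}). Then w is twice differentiable on (0,1), the function t ↦ t^{M−1}w'(t) is differentiable on (0,1), and (t^{M−1}w'(t))' = −(2/(2+α))²·t^{M−1}·|w(t)|^{p−1}w(t) for every t ∈ (0,1). -/
/-- Let `N ≥ 2`, `α ≥ 0`, `p > 1` and `M = 2(N+α)/(2+α)`. If `u` solves the radial Hénon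
equation `u'' + ((N−1)/r)u' + r^α|u|^{p−1}u = 0` on `(0,1)`, then `w(t) = u(t^{2/(2+α)})`
is twice differentiable on `(0,1)`, `t ↦ t^{M−1}w'(t)` is differentiable on `(0,1)`, and
`(t^{M−1}w'(t))' = −(2/(2+α))²·t^{M−1}·|w(t)|^{p−1}w(t)` on `(0,1)`. -/
theorem henon_radial_transformation (N : ℕ) (hN : 2 ≤ N) (α p M : ℝ) (hα : 0 ≤ α)
    (hp : 1 < p) (hM : M = 2 * ((N : ℝ) + α) / (2 + α))
    (u u' u'' : ℝ → ℝ)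
    (hu1 : ∀ r ∈ Set.Ioo (0 : ℝ) 1, HasDerivAt u (u' r) r)
    (hu2 : ∀ r ∈ Set.Ioo (0 : ℝ) 1, HasDerivAt u' (u'' r) r)
    (heq : ∀ r ∈ Set.Ioo (0 : ℝ) 1,
      u'' r + (((N : ℝ) - 1) / r) * u' r + r ^ α * |u r| ^ (p - 1) * u r = 0)
    (w : ℝ → ℝ) (hw : w = fun t => u (t ^ ((2 : ℝ) / (2 + α)))) :
    ∃ w' w'' : ℝ → ℝ,
      (∀ t ∈ Set.Ioo (0 : ℝ) 1, HasDerivAt w (w' t) t) ∧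
      (∀ t ∈ Set.Ioo (0 : ℝ) 1, HasDerivAt w' (w'' t) t) ∧
      (∀ t ∈ Set.Ioo (0 : ℝ) 1, HasDerivAt (fun s => s ^ (M - 1) * w' s)
        (-(2 / (2 + α)) ^ 2 * t ^ (M - 1) * |w t| ^ (p - 1) * w t) t) := by
  have h2α : (0:ℝ) < 2 + α := by linarith
  set B : ℝ := 2 / (2 + α) with hBdef
  have hB : 0 < B := by positivity
  refine ⟨fun t => u' (t ^ B) * (B * t ^ (B - 1)),
    fun t => (u'' (t ^ B) * (B * t ^ (B - 1))) * (B * t ^ (B - 1))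
      + u' (t ^ B) * (B * ((B - 1) * t ^ (B - 1 - 1))), ?_, ?_, ?_⟩
  · rintro t ⟨ht0, ht1⟩
    have hr : t ^ B ∈ Set.Ioo (0:ℝ) 1 :=
      ⟨Real.rpow_pos_of_pos ht0 B, Real.rpow_lt_one ht0.le ht1 hB⟩
    have hg : HasDerivAt (fun x : ℝ => x ^ B) (B * t ^ (B - 1)) t :=
      Real.hasDerivAt_rpow_const (Or.inl ht0.ne')
    have := (hu1 _ hr).comp t hg
    rw [hw]
    exact this
  · rintro t ⟨ht0, ht1⟩
    have hr : t ^ B ∈ Set.Ioo (0:ℝ) 1 :=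
      ⟨Real.rpow_pos_of_pos ht0 B, Real.rpow_lt_one ht0.le ht1 hB⟩
    have hg : HasDerivAt (fun x : ℝ => x ^ B) (B * t ^ (B - 1)) t :=
      Real.hasDerivAt_rpow_const (Or.inl ht0.ne')
    have hg2 : HasDerivAt (fun x : ℝ => B * x ^ (B - 1)) (B * ((B - 1) * t ^ (B - 1 - 1))) t :=
      (Real.hasDerivAt_rpow_const (Or.inl ht0.ne')).const_mul B
    exact (((hu2 _ hr).comp t hg).mul hg2)
  · rintro t ⟨ht0, ht1⟩
    have hr : t ^ B ∈ Set.Ioo (0:ℝ) 1 :=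
      ⟨Real.rpow_pos_of_pos ht0 B, Real.rpow_lt_one ht0.le ht1 hB⟩
    have hg : HasDerivAt (fun x : ℝ => x ^ B) (B * t ^ (B - 1)) t :=
      Real.hasDerivAt_rpow_const (Or.inl ht0.ne')
    have hg2 : HasDerivAt (fun x : ℝ => B * x ^ (B - 1)) (B * ((B - 1) * t ^ (B - 1 - 1))) t :=
      (Real.hasDerivAt_rpow_const (Or.inl ht0.ne')).const_mul B
    have hw2 : HasDerivAt (fun s : ℝ => u' (s ^ B) * (B * s ^ (B - 1)))
        ((u'' (t ^ B) * (B * t ^ (B - 1))) * (B * t ^ (B - 1))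
          + u' (t ^ B) * (B * ((B - 1) * t ^ (B - 1 - 1)))) t :=
      (((hu2 _ hr).comp t hg).mul hg2)
    have hpow : HasDerivAt (fun s : ℝ => s ^ (M - 1)) ((M - 1) * t ^ (M - 1 - 1)) t :=
      Real.hasDerivAt_rpow_const (Or.inl ht0.ne')
    have h3 := hpow.mul hw2
    have hval := heq _ hr
    -- notation
    set V := u' (t ^ B)
    set U := u (t ^ B)
    set A := |u (t ^ B)| ^ (p - 1)
    have hu''val : u'' (t ^ B) = -((((N:ℝ) - 1) / t ^ B) * V) - (t ^ B) ^ α * A * U := by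
      linarith [hval]
    -- monomial identities
    have hBα : B * α = 2 - 2 * B := by
      rw [hBdef]; field_simp; ring
    have m1 : t ^ (M - 1 - 1) * t ^ (B - 1) = t ^ (M + B - 3) := by
      rw [← Real.rpow_add ht0, show M - 1 - 1 + (B - 1) = M + B - 3 by ring]
    have m2 : t ^ (M - 1) / t ^ B * t ^ (B - 1) * t ^ (B - 1) = t ^ (M + B - 3) := by
      rw [← Real.rpow_sub ht0, ← Real.rpow_add ht0, ← Real.rpow_add ht0,
        show M - 1 - B + (B - 1) + (B - 1) = M + B - 3 by ring]
    have m3 : t ^ (M - 1) * ((t ^ B) ^ α * (t ^ (B - 1) * t ^ (B - 1))) = t ^ (M - 1) := by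
      rw [← Real.rpow_mul ht0.le, ← Real.rpow_add ht0, ← Real.rpow_add ht0,
        show B * α + (B - 1 + (B - 1)) = 0 by linarith [hBα], Real.rpow_zero, mul_one]
    have m4 : t ^ (M - 1) * t ^ (B - 1 - 1) = t ^ (M + B - 3) := by
      rw [← Real.rpow_add ht0, show M - 1 + (B - 1 - 1) = M + B - 3 by ring]
    have coef : (M - 1) * B + B * (B - 1) - B ^ 2 * ((N:ℝ) - 1) = 0 := by
      rw [hM, hBdef]; field_simp; ring
    have key : (M - 1) * t ^ (M - 1 - 1) * (V * (B * t ^ (B - 1)))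
        + t ^ (M - 1) * ((u'' (t ^ B) * (B * t ^ (B - 1))) * (B * t ^ (B - 1))
          + V * (B * ((B - 1) * t ^ (B - 1 - 1))))
        = -B ^ 2 * t ^ (M - 1) * A * U := by
      rw [hu''val]
      linear_combination ((M - 1) * B * V) * m1 - (B ^ 2 * ((N:ℝ) - 1) * V) * m2
        - (B ^ 2 * A * U) * m3 + (B * (B - 1) * V) * m4
        + (t ^ (M + B - 3) * V) * coef
    rw [hw]
    have h4 : HasDerivAt (fun s : ℝ => s ^ (M - 1) * (u' (s ^ B) * (B * s ^ (B - 1))))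
        (-B ^ 2 * t ^ (M - 1) * A * U) t := by
      rw [← key]; exact h3
    exact h4
end
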